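/- Let σ be a client equilibrium and define the 'shares-a-client' relation on facilities: p ~ q iff some client places positive weight on both p and q. Then any two facilities connected by a finite chain under this relation have equal loads; i.e., all facilities in the same connected component of the sharing graph have the same load in σ. -/
import Mathlib


open Finset

/-- Load of facility `j` under weight distribution `σ`. -/
def load {n k : ℕ} (σ : Fin n → Fin k → ℝ) (j : Fin k) : ℝ := ∑ i, σ i j

/-- A feasible client weight distribution: nonnegative, supported on accessible
facilities, and clients with a nonempty accessible set distribute their full weight. -/
def Feasible {n k : ℕ} (w : Fin n → ℝ) (N : Fin n → Finset (Fin k))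
    (σ : Fin n → Fin k → ℝ) : Prop :=
  (∀ i j, 0 ≤ σ i j) ∧
  (∀ i j, j ∉ N i → σ i j = 0) ∧
  (∀ i, (N i).Nonempty → ∑ j ∈ N i, σ i j = w i)

/-- Client equilibrium: no client puts positive weight on a facility while a
strictly less loaded accessible facility exists. -/
def ClientEq {n k : ℕ} (w : Fin n → ℝ) (N : Fin n → Finset (Fin k))
    (σ : Fin n → Fin k → ℝ) : Prop :=
  Feasible w N σ ∧
  ∀ i : Fin n, ∀ j ∈ N i, ∀ j' ∈ N i, 0 < σ i j → load σ j ≤ load σ j'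

/-- The sharing relation on facilities: some client puts positive weight on both. -/
def Shares {n k : ℕ} (σ : Fin n → Fin k → ℝ) (p q : Fin k) : Prop :=
  ∃ i : Fin n, 0 < σ i p ∧ 0 < σ i q

/-- In a client equilibrium, all facilities in the same connected component of the
sharing graph have equal load. -/
theorem shared_component_equal_load (n k : ℕ)
    (w : Fin n → ℝ) (hw : ∀ i, 0 < w i) (N : Fin n → Finset (Fin k))
    (σ : Fin n → Fin k → ℝ) (heq : ClientEq w N σ)
    (p q : Fin k) (hchain : Relation.ReflTransGen (Shares σ) p q) :
    load σ p = load σ q := by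
  obtain ⟨⟨hpos, hsupp, _⟩, hEq⟩ := heq
  induction hchain with
  | refl => rfl
  | @tail b c _ hshare ih =>
    obtain ⟨i, hp, hq⟩ := hshare
    have hpN : b ∈ N i := by
      by_contra h; exact absurd (hsupp i _ h) (ne_of_gt hp)
    have hqN : c ∈ N i := by
      by_contra h; exact absurd (hsupp i _ h) (ne_of_gt hq)
    exact ih.trans (le_antisymm (hEq i _ hpN _ hqN hp) (hEq i _ hqN _ hpN hq))
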